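/- arXiv:1307.4724 — 2 statements merged into one kernel-verified Lean document; each statement's English description precedes it below -/
import Mathlib

section
/- Let G and H be finite connected nontrivial simple graphs. Then the strong resolving graph (G ⊠ H)_SR of the strong product is a subgraph of the Cartesian sum G_SR ⊕ H_SR of the strong resolving graphs; that is, they have the same vertex set V(G) × V(H), and every pair of vertices adjacent in (G ⊠ H)_SR is adjacent in G_SR ⊕ H_SR. -/
open SimpleGraph Finset

variable {α β : Type*}

/-- The strong product of two simple graphs: distinct vertices `(a,b)` and `(c,d)` are adjacent
iff (`a = c` or `a ~ c`) and (`b = d` or `b ~ d`). -/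
def strongProd (G : SimpleGraph α) (H : SimpleGraph β) : SimpleGraph (α × β) where
  Adj x y := x ≠ y ∧ (x.1 = y.1 ∨ G.Adj x.1 y.1) ∧ (x.2 = y.2 ∨ H.Adj x.2 y.2)
  symm := by
    constructor
    rintro x y ⟨h1, h2, h3⟩
    exact ⟨h1.symm, h2.imp Eq.symm (fun a => a.symm), h3.imp Eq.symm (fun a => a.symm)⟩
  loopless := ⟨fun x h => h.1 rfl⟩

/-- The Cartesian sum (disjunctive product) of two simple graphs. -/
def cartSum (G : SimpleGraph α) (H : SimpleGraph β) : SimpleGraph (α × β) where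
  Adj x y := x ≠ y ∧ (G.Adj x.1 y.1 ∨ H.Adj x.2 y.2)
  symm := by
    constructor
    rintro x y ⟨h1, h2⟩
    exact ⟨h1.symm, h2.imp (fun a => a.symm) (fun a => a.symm)⟩
  loopless := ⟨fun x h => h.1 rfl⟩

/-- `u` is maximally distant from `v` in `G`. -/
def MaximallyDistantFrom (G : SimpleGraph α) (u v : α) : Prop :=
  ∀ w, G.Adj u w → G.dist v w ≤ G.dist u v

/-- `u` and `v` are mutually maximally distant in `G`. -/
def MutuallyMaximallyDistant (G : SimpleGraph α) (u v : α) : Prop :=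
  MaximallyDistantFrom G u v ∧ MaximallyDistantFrom G v u

/-- The strong resolving graph of `G`. -/
def strongResolvingGraph (G : SimpleGraph α) : SimpleGraph α where
  Adj u v := u ≠ v ∧ MutuallyMaximallyDistant G u v
  symm := by constructor; rintro u v ⟨h1, h2, h3⟩; exact ⟨h1.symm, h3, h2⟩
  loopless := ⟨fun x h => h.1 rfl⟩

/-- A finset of vertices is independent if no two of its (distinct) members are adjacent. -/
def IsIndepFinset (G : SimpleGraph α) (s : Finset α) : Prop :=
  ∀ u ∈ s, ∀ v ∈ s, u ≠ v → ¬ G.Adj u v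

/-- The independence number `β(G)`. -/
noncomputable def indepNum (G : SimpleGraph α) [Fintype α] : ℕ :=
  sSup {n | ∃ s : Finset α, IsIndepFinset G s ∧ s.card = n}

/-- `w` strongly resolves `u` and `v` in `G`. -/
def StronglyResolves (G : SimpleGraph α) (w u v : α) : Prop :=
  G.dist w u = G.dist w v + G.dist v u ∨ G.dist w v = G.dist w u + G.dist u v

/-- A strong metric generator for `G`. -/
def IsStrongMetricGenerator (G : SimpleGraph α) (s : Finset α) : Prop :=
  ∀ u v : α, u ≠ v → ∃ w ∈ s, StronglyResolves G w u v

/-- The strong metric dimension of `G`. -/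
noncomputable def sdim (G : SimpleGraph α) [Fintype α] : ℕ :=
  sInf {n | ∃ s : Finset α, IsStrongMetricGenerator G s ∧ s.card = n}

section Aux

variable {G : SimpleGraph α} {H : SimpleGraph β}

/-- Combine a walk in `G` and a walk in `H` into a walk in the strong product. -/
def walkProd : {a c : α} → {b d : β} → G.Walk a c → H.Walk b d →
    (strongProd G H).Walk (a, b) (c, d)
  | _, _, _, _, .nil, .nil => .nil
  | a, _, _, _, .nil, .cons (v := b') h q =>
      .cons (v := (a, b')) ⟨fun he => h.ne (congrArg Prod.snd he), Or.inl rfl, Or.inr h⟩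
        (walkProd .nil q)
  | _, _, b, _, .cons (v := a') h p, .nil =>
      .cons (v := (a', b)) ⟨fun he => h.ne (congrArg Prod.fst he), Or.inr h, Or.inl rfl⟩
        (walkProd p .nil)
  | _, _, _, _, .cons (v := a') h p, .cons (v := b') h' q =>
      .cons (v := (a', b')) ⟨fun he => h.ne (congrArg Prod.fst he), Or.inr h, Or.inr h'⟩
        (walkProd p q)

lemma walkProd_length : ∀ {a c : α} {b d : β} (p : G.Walk a c) (q : H.Walk b d),
    (walkProd p q).length = max p.length q.length
  | _, _, _, _, .nil, .nil => by simp [walkProd]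
  | _, _, _, _, .nil, .cons h q => by
      simp [walkProd, walkProd_length Walk.nil q]
      show (walkProd Walk.nil q).length + 1 = _
      rw [walkProd_length]; simp
  | _, _, _, _, .cons h p, .nil => by
      simp [walkProd, walkProd_length p Walk.nil]
      show (walkProd p Walk.nil).length + 1 = _
      rw [walkProd_length]; simp
  | _, _, _, _, .cons h p, .cons h' q => by
      simp [walkProd, walkProd_length p q, Nat.succ_max_succ]
      exact congrArg (· + 1) (walkProd_length p q)

lemma fst_dist_le_length (hG : G.Connected) : ∀ {x y : α × β}
    (r : (strongProd G H).Walk x y), G.dist x.1 y.1 ≤ r.length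
  | _, _, .nil => by simp
  | x, y, .cons (v := z) h r => by
      have hr := fst_dist_le_length hG r
      rcases h.2.1 with he | ha
      · rw [he]; exact hr.trans (Nat.le_succ _)
      · have h1 : G.dist x.1 z.1 ≤ 1 := le_of_eq (dist_eq_one_iff_adj.mpr ha)
        calc G.dist x.1 y.1 ≤ G.dist x.1 z.1 + G.dist z.1 y.1 := hG.dist_triangle
          _ ≤ 1 + r.length := Nat.add_le_add h1 hr
          _ = r.length + 1 := Nat.add_comm _ _

lemma snd_dist_le_length (hH : H.Connected) : ∀ {x y : α × β}
    (r : (strongProd G H).Walk x y), H.dist x.2 y.2 ≤ r.length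
  | _, _, .nil => by simp
  | x, y, .cons (v := z) h r => by
      have hr := snd_dist_le_length hH r
      rcases h.2.2 with he | ha
      · rw [he]; exact hr.trans (Nat.le_succ _)
      · have h1 : H.dist x.2 z.2 ≤ 1 := le_of_eq (dist_eq_one_iff_adj.mpr ha)
        calc H.dist x.2 y.2 ≤ H.dist x.2 z.2 + H.dist z.2 y.2 := hH.dist_triangle
          _ ≤ 1 + r.length := Nat.add_le_add h1 hr
          _ = r.length + 1 := Nat.add_comm _ _

lemma dist_strongProd (hG : G.Connected) (hH : H.Connected) (x y : α × β) :
    (strongProd G H).dist x y = max (G.dist x.1 y.1) (H.dist x.2 y.2) := by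
  obtain ⟨a, b⟩ := x; obtain ⟨c, d⟩ := y
  obtain ⟨p, hp⟩ := hG.exists_walk_length_eq_dist a c
  obtain ⟨q, hq⟩ := hH.exists_walk_length_eq_dist b d
  apply le_antisymm
  · calc (strongProd G H).dist (a, b) (c, d) ≤ (walkProd p q).length := dist_le _
      _ = max p.length q.length := walkProd_length p q
      _ = _ := by rw [hp, hq]
  · obtain ⟨r, hr⟩ := Reachable.exists_walk_length_eq_dist ⟨walkProd p q⟩
    rw [← hr]
    exact max_le (fst_dist_le_length hG r) (snd_dist_le_length hH r)

end Aux

theorem SR_strongProd_le_cartSum_SR [Fintype α] [Fintype β]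
    (G : SimpleGraph α) (H : SimpleGraph β)
    (hG : G.Connected) (hGn : Nontrivial α) (hH : H.Connected) (hHn : Nontrivial β) :
    strongResolvingGraph (strongProd G H) ≤
      cartSum (strongResolvingGraph G) (strongResolvingGraph H) := by
  rintro ⟨a, b⟩ ⟨c, d⟩ ⟨hne, hmd1, hmd2⟩
  have hdist := dist_strongProd hG hH
  refine ⟨hne, ?_⟩
  by_cases hle : H.dist b d ≤ G.dist a c
  · left
    have hac : a ≠ c := by
      rintro rfl
      rw [SimpleGraph.dist_self] at hle
      have hbd : H.dist b d = 0 := Nat.le_zero.mp hle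
      exact hne (by rw [hH.dist_eq_zero_iff.mp hbd])
    refine ⟨hac, ?_, ?_⟩
    · intro w hw
      have key := hmd1 (w, b) ⟨fun he => hw.ne (congrArg Prod.fst he), Or.inr hw, Or.inl rfl⟩
      rw [hdist, hdist] at key
      simp only at key
      show G.dist c w ≤ G.dist a c
      exact le_trans (le_trans (le_max_left _ _) key) (le_of_eq (max_eq_left hle))
    · intro w hw
      have key := hmd2 (w, d) ⟨fun he => hw.ne (congrArg Prod.fst he), Or.inr hw, Or.inl rfl⟩
      rw [hdist, hdist] at key
      simp only at key
      show G.dist a w ≤ G.dist c a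
      have h2 : H.dist d b ≤ G.dist c a := by
        rw [SimpleGraph.dist_comm (u := d) (v := b), SimpleGraph.dist_comm (u := c) (v := a)]
        exact hle
      exact le_trans (le_trans (le_max_left _ _) key) (le_of_eq (max_eq_left h2))
  · right
    push_neg at hle
    have hle' : G.dist a c ≤ H.dist b d := le_of_lt hle
    have hbd : b ≠ d := by
      rintro rfl
      rw [SimpleGraph.dist_self] at hle
      exact Nat.not_lt_zero _ hle
    refine ⟨hbd, ?_, ?_⟩
    · intro w hw
      have key := hmd1 (a, w) ⟨fun he => hw.ne (congrArg Prod.snd he), Or.inl rfl, Or.inr hw⟩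
      rw [hdist, hdist] at key
      simp only at key
      show H.dist d w ≤ H.dist b d
      exact le_trans (le_trans (le_max_right _ _) key) (le_of_eq (max_eq_right hle'))
    · intro w hw
      have key := hmd2 (c, w) ⟨fun he => hw.ne (congrArg Prod.snd he), Or.inl rfl, Or.inr hw⟩
      rw [hdist, hdist] at key
      simp only at key
      show H.dist b w ≤ H.dist d b
      have h2 : G.dist c a ≤ H.dist d b := by
        rw [SimpleGraph.dist_comm (u := d) (v := b), SimpleGraph.dist_comm (u := c) (v := a)]
        exact hle'
      exact le_trans (le_trans (le_max_right _ _) key) (le_of_eq (max_eq_right h2))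
end

section
/- For every integer t ≥ 1, the strong metric dimension of the strong product of the triangle C₃ with the odd cycle C_{2t+1} satisfies dim_s(C₃ ⊠ C_{2t+1}) = 5t + 3. -/
open SimpleGraph Finset

variable {α β : Type*}

section Aux

lemma fin_sub_val {m : ℕ} (a b : Fin m) :
    (a - b).val = if b.val ≤ a.val then a.val - b.val else a.val + m - b.val := by
  rw [Fin.sub_def]
  have hb := b.isLt
  have ha := a.isLt
  simp only []
  split
  · have : m - b.val + a.val = (a.val - b.val) + m := by omega
    rw [this, Nat.add_mod_right, Nat.mod_eq_of_lt (by omega)]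
  · rw [Nat.mod_eq_of_lt (by omega)]
    omega

/-- circular distance -/
def cd {m : ℕ} (a b : Fin m) : ℕ := min (a - b).val (b - a).val

lemma cycle_conn {m : ℕ} (hm : 2 ≤ m) : (cycleGraph m).Connected := by
  have : Nonempty (Fin m) := ⟨⟨0, by omega⟩⟩
  exact Connected.mk cycleGraph_preconnected

lemma cycle_dist_le {m : ℕ} (hm : 2 ≤ m) (i j : Fin m) :
    (cycleGraph m).dist i j ≤ (j - i).val := by
  have hconn := cycle_conn hm
  generalize hd : (j - i).val = d
  induction d generalizing j with
  | zero =>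
    have : i = j := by
      apply Fin.ext
      rw [fin_sub_val] at hd
      have := i.isLt; have := j.isLt
      split at hd <;> omega
    simp [this]
  | succ d ih =>
    set one : Fin m := ⟨1, by omega⟩ with hone
    set j' : Fin m := j - one with hj'
    have hj'v : j'.val = if 1 ≤ j.val then j.val - 1 else j.val + m - 1 := by
      rw [hj', fin_sub_val]
    have hd' : (j' - i).val = d := by
      rw [fin_sub_val] at hd ⊢
      have := i.isLt; have := j.isLt; have := j'.isLt
      split_ifs at hd ⊢ <;> split_ifs at hj'v <;> omega
    have hadj : (cycleGraph m).Adj j' j := by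
      rw [cycleGraph_adj']
      right
      rw [fin_sub_val]
      have := j.isLt; have := j'.isLt
      split_ifs at hj'v ⊢ <;> omega
    calc (cycleGraph m).dist i j ≤ (cycleGraph m).dist i j' + (cycleGraph m).dist j' j :=
          hconn.dist_triangle
      _ ≤ d + 1 := by
          have h1 : (cycleGraph m).dist j' j = 1 := dist_eq_one_iff_adj.mpr hadj
          have h2 := ih j' hd'
          omega

lemma cd_step {m : ℕ} (i i' j : Fin m)
    (h : (i - i').val = 1 ∨ (i' - i).val = 1) :
    cd i j ≤ cd i' j + 1 := by
  have hx := i.isLt; have hy := i'.isLt; have hz := j.isLt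
  unfold cd
  simp only [fin_sub_val] at *
  split_ifs at * <;> omega

lemma cd_le_walk {m : ℕ} {i j : Fin m} (p : (cycleGraph m).Walk i j) :
    cd i j ≤ p.length := by
  induction p with
  | nil => simp [cd, fin_sub_val]
  | cons h q ih =>
    rename_i u v w
    have hs := cd_step u v w (by rwa [cycleGraph_adj'] at h)
    simp only [SimpleGraph.Walk.length_cons]
    omega

lemma cycle_dist_eq {m : ℕ} (hm : 2 ≤ m) (i j : Fin m) :
    (cycleGraph m).dist i j = cd i j := by
  apply le_antisymm
  · exact le_min (by rw [dist_comm]; exact (cycle_dist_le hm j i)) (cycle_dist_le hm i j)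
  · obtain ⟨p, hp⟩ := (cycle_conn hm).exists_walk_length_eq_dist i j
    calc cd i j ≤ p.length := cd_le_walk p
      _ = _ := hp
abbrev PG (m : ℕ) := strongProd (cycleGraph 3) (cycleGraph m)

lemma dist3_eq (a c : Fin 3) :
    (cycleGraph 3).dist a c = if a = c then 0 else 1 := by
  split
  · simp [*]
  · exact dist_eq_one_iff_adj.mpr (by rw [cycleGraph_three_eq_top]; exact ‹a ≠ c›)

lemma dist3_le_one (a c : Fin 3) : (cycleGraph 3).dist a c ≤ 1 := by
  rw [dist3_eq]; split <;> omega

lemma adj3_of_ne {a c : Fin 3} (h : a ≠ c) : (cycleGraph 3).Adj a c := by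
  rw [cycleGraph_three_eq_top]; exact h

lemma PG_proj1 {m : ℕ} {x y : Fin 3 × Fin m} (p : (PG m).Walk x y) :
    (cycleGraph 3).dist x.1 y.1 ≤ p.length := by
  induction p with
  | nil => simp
  | cons h q ih =>
    rename_i u v w
    have h1 : (cycleGraph 3).dist u.1 v.1 ≤ 1 := by
      rcases h.2.1 with h' | h'
      · rw [h', SimpleGraph.dist_self]; omega
      · exact (dist_eq_one_iff_adj.mpr h').le
    have h2 := (cycle_conn (m := 3) (by omega)).dist_triangle (u := u.1) (v := v.1) (w := w.1)
    simp only [SimpleGraph.Walk.length_cons]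
    omega

lemma PG_proj2 {m : ℕ} (hm : 3 ≤ m) {x y : Fin 3 × Fin m} (p : (PG m).Walk x y) :
    (cycleGraph m).dist x.2 y.2 ≤ p.length := by
  induction p with
  | nil => simp
  | cons h q ih =>
    rename_i u v w
    have h1 : (cycleGraph m).dist u.2 v.2 ≤ 1 := by
      rcases h.2.2 with h' | h'
      · rw [h', SimpleGraph.dist_self]; omega
      · exact (dist_eq_one_iff_adj.mpr h').le
    have h2 := (cycle_conn (m := m) (by omega)).dist_triangle (u := u.2) (v := v.2) (w := w.2)
    simp only [SimpleGraph.Walk.length_cons]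
    omega

lemma PG_lift2 {m : ℕ} (a : Fin 3) {b d : Fin m} (q : (cycleGraph m).Walk b d) :
    ∃ p : (PG m).Walk (a, b) (a, d), p.length = q.length := by
  induction q with
  | nil => exact ⟨.nil, rfl⟩
  | cons h q ih =>
    rename_i u v w
    obtain ⟨p, hp⟩ := ih
    refine ⟨.cons (show (PG m).Adj (a, u) (a, v) from ⟨?_, Or.inl rfl, Or.inr h⟩) p,
      by simp [hp]⟩
    simp only [ne_eq, Prod.mk.injEq, not_and]
    exact fun _ => h.ne

lemma PG_walk_exists {m : ℕ} (hm : 3 ≤ m) (u v : Fin 3 × Fin m) :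
    ∃ p : (PG m).Walk u v, p.length = max ((cycleGraph 3).dist u.1 v.1) ((cycleGraph m).dist u.2 v.2) := by
  obtain ⟨a, b⟩ := u
  obtain ⟨c, d⟩ := v
  simp only
  by_cases hbd : b = d
  · subst hbd
    by_cases hac : a = c
    · subst hac
      exact ⟨.nil, by simp [SimpleGraph.dist_self]⟩
    · refine ⟨.cons (show (PG m).Adj (a, b) (c, b) from
          ⟨?_, Or.inr (adj3_of_ne hac), Or.inl rfl⟩) .nil, ?_⟩
      · simp only [ne_eq, Prod.mk.injEq, not_and]
        exact fun h => absurd h hac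
      · rw [dist3_eq, SimpleGraph.dist_self]
        simp [hac]
  · have hk : 1 ≤ (cycleGraph m).dist b d :=
      (cycle_conn (by omega)).pos_dist_of_ne hbd
    obtain ⟨q, hq⟩ := (cycle_conn (by omega) (m := m)).exists_walk_length_eq_dist b d
    cases q with
    | nil => exact absurd rfl hbd
    | cons h q' =>
      rename_i mid
      obtain ⟨p, hp⟩ := PG_lift2 c q'
      have hadj : (PG m).Adj (a, b) (c, mid) := by
        refine ⟨?_, ?_, Or.inr h⟩
        · simp only [ne_eq, Prod.mk.injEq, not_and]
          exact fun _ => h.ne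
        · by_cases hac : a = c
          · exact Or.inl hac
          · exact Or.inr (adj3_of_ne hac)
      refine ⟨.cons hadj p, ?_⟩
      simp only [SimpleGraph.Walk.length_cons, hp]
      have h3 := dist3_le_one a c
      simp only [SimpleGraph.Walk.length_cons] at hq
      omega

lemma PG_conn {m : ℕ} (hm : 3 ≤ m) : (PG m).Connected := by
  have : Nonempty (Fin 3 × Fin m) := ⟨(0 : Fin 3), ⟨0, by omega⟩⟩
  refine Connected.mk fun u v => ?_
  obtain ⟨p, -⟩ := PG_walk_exists hm u v
  exact ⟨p⟩

lemma PG_dist {m : ℕ} (hm : 3 ≤ m) (u v : Fin 3 × Fin m) :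
    (PG m).dist u v = max ((cycleGraph 3).dist u.1 v.1) ((cycleGraph m).dist u.2 v.2) := by
  apply le_antisymm
  · obtain ⟨p, hp⟩ := PG_walk_exists hm u v
    exact hp ▸ dist_le p
  · obtain ⟨p, hp⟩ := (PG_conn hm).exists_walk_length_eq_dist u v
    exact max_le (hp ▸ PG_proj1 p) (hp ▸ PG_proj2 hm p)
lemma fin_add_val {m : ℕ} (a b : Fin m) :
    (a + b).val = if a.val + b.val < m then a.val + b.val else a.val + b.val - m := by
  rw [Fin.add_def]
  have ha := a.isLt; have hb := b.isLt
  simp only [Fin.val_mk]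
  split
  · exact Nat.mod_eq_of_lt ‹_›
  · rw [Nat.mod_eq_sub_mod (by omega), Nat.mod_eq_of_lt (by omega)]

lemma cd_le_t {t : ℕ} (x y : Fin (2*t+1)) : cd x y ≤ t := by
  have hx := x.isLt; have hy := y.isLt
  unfold cd
  rw [fin_sub_val, fin_sub_val]
  split_ifs <;> omega

lemma adj_snd_dist_le {m : ℕ} {u w : Fin 3 × Fin m} (h : (PG m).Adj u w) :
    (cycleGraph m).dist u.2 w.2 ≤ 1 := by
  rcases h.2.2 with h' | h'
  · rw [h', SimpleGraph.dist_self]; omega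
  · exact (dist_eq_one_iff_adj.mpr h').le

lemma mmd_col {m : ℕ} (hm : 3 ≤ m) {u v : Fin 3 × Fin m} (h2 : u.2 = v.2) (hne : u ≠ v) :
    MutuallyMaximallyDistant (PG m) u v := by
  have h1 : u.1 ≠ v.1 := fun h => hne (Prod.ext h h2)
  have hduv : (PG m).dist u v = 1 := by
    rw [PG_dist hm, dist3_eq, h2, SimpleGraph.dist_self]
    simp [h1]
  have hdvu : (PG m).dist v u = 1 := by rw [SimpleGraph.dist_comm]; exact hduv
  constructor
  · intro w hw
    rw [hduv, PG_dist hm]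
    have hb := dist3_le_one v.1 w.1
    have hsnd : (cycleGraph m).dist v.2 w.2 ≤ 1 := by
      rw [← h2]; exact adj_snd_dist_le hw
    omega
  · intro w hw
    rw [hdvu, PG_dist hm]
    have hb := dist3_le_one u.1 w.1
    have hsnd : (cycleGraph m).dist u.2 w.2 ≤ 1 := by
      rw [h2]; exact adj_snd_dist_le hw
    omega

lemma mmd_far {t : ℕ} (ht : 1 ≤ t) {u v : Fin 3 × Fin (2*t+1)}
    (h2 : cd u.2 v.2 = t) : MutuallyMaximallyDistant (PG (2*t+1)) u v := by
  have hm : (3:ℕ) ≤ 2*t+1 := by omega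
  have h2m : (2:ℕ) ≤ 2*t+1 := by omega
  have hcdc : cd v.2 u.2 = t := by unfold cd at h2 ⊢; omega
  have hduv : (PG (2*t+1)).dist u v = t := by
    rw [PG_dist hm, cycle_dist_eq h2m, h2]
    have := dist3_le_one u.1 v.1
    omega
  have hdvu : (PG (2*t+1)).dist v u = t := by rw [SimpleGraph.dist_comm]; exact hduv
  constructor
  · intro w hw
    rw [hduv, PG_dist hm, cycle_dist_eq h2m]
    have hb := dist3_le_one v.1 w.1
    have hc := cd_le_t v.2 w.2
    omega
  · intro w hw
    rw [hdvu, PG_dist hm, cycle_dist_eq h2m]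
    have hb := dist3_le_one u.1 w.1
    have hc := cd_le_t u.2 w.2
    omega

lemma resolver_eq {V : Type*} {G : SimpleGraph V} (hc : G.Connected) {u v w : V}
    (hmd : MaximallyDistantFrom G v u) (h : G.dist w u = G.dist w v + G.dist v u)
    (huv : u ≠ v) : w = v := by
  by_contra hne
  obtain ⟨p, hp⟩ := hc.exists_walk_length_eq_dist v w
  cases p with
  | nil => exact hne rfl
  | cons hadj q =>
    rename_i v'
    have h1 : G.dist v' w ≤ q.length := dist_le q
    simp only [SimpleGraph.Walk.length_cons] at hp
    have h2 : G.dist u v' ≤ G.dist v u := hmd v' hadj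
    have h3 : G.dist u w ≤ G.dist u v' + G.dist v' w := hc.dist_triangle
    have e1 : G.dist u w = G.dist w u := SimpleGraph.dist_comm
    have e2 : G.dist v w = G.dist w v := SimpleGraph.dist_comm
    have e3 : G.dist v u = G.dist u v := SimpleGraph.dist_comm
    have hpos : 0 < G.dist v w := hc.pos_dist_of_ne (fun h' => hne h'.symm)
    omega

lemma resolver_mem {V : Type*} {G : SimpleGraph V} (hc : G.Connected) {u v w : V}
    (hmmd : MutuallyMaximallyDistant G u v) (huv : u ≠ v)
    (h : StronglyResolves G w u v) : w = u ∨ w = v := by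
  rcases h with h | h
  · exact Or.inr (resolver_eq hc hmmd.2 h huv)
  · exact Or.inl (resolver_eq hc hmmd.1 h huv.symm)

lemma stronglyResolves_symm {V : Type*} {G : SimpleGraph V} {w u v : V}
    (h : StronglyResolves G w u v) : StronglyResolves G w v u := h.symm

lemma cd_mk {m : ℕ} (p q : Fin m) :
    cd p q = min (if q.val ≤ p.val then p.val - q.val else p.val + m - q.val)
      (if p.val ≤ q.val then q.val - p.val else q.val + m - p.val) := by
  unfold cd; rw [fin_sub_val, fin_sub_val]

lemma resolve_helper {t : ℕ} (ht : 1 ≤ t) (u v : Fin 3 × Fin (2*t+1))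
    (hi : u.2.val < t) (hj : v.2.val < t) (hij : u.2.val < v.2.val) :
    StronglyResolves (PG (2*t+1)) ((0 : Fin 3), (⟨u.2.val + t, by omega⟩ : Fin (2*t+1))) u v := by
  have hm : (3:ℕ) ≤ 2*t+1 := by omega
  have h2m : (2:ℕ) ≤ 2*t+1 := by omega
  obtain ⟨a, x⟩ := u
  obtain ⟨c, y⟩ := v
  simp only at hi hj hij
  left
  rw [PG_dist hm, PG_dist hm, PG_dist hm, cycle_dist_eq h2m, cycle_dist_eq h2m,
    cycle_dist_eq h2m]
  simp only
  have b1 := dist3_le_one (0:Fin 3) a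
  have b2 := dist3_le_one (0:Fin 3) c
  have b3 := dist3_le_one c a
  have hxv := x.isLt; have hyv := y.isLt
  have c1 : cd (⟨x.val + t, by omega⟩ : Fin (2*t+1)) x = t := by
    rw [cd_mk]; simp only [Fin.val_mk]; split_ifs <;> omega
  have c2 : cd (⟨x.val + t, by omega⟩ : Fin (2*t+1)) y = t - (y.val - x.val) := by
    rw [cd_mk]; simp only [Fin.val_mk]; split_ifs <;> omega
  have c3 : cd y x = y.val - x.val := by
    rw [cd_mk]; split_ifs <;> omega
  omega

lemma fin_add_right_cancel {m : ℕ} {a b c : Fin m} (h : a + c = b + c) : a = b := by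
  have hv : (a + c).val = (b + c).val := by rw [h]
  rw [fin_add_val, fin_add_val] at hv
  have := a.isLt; have := b.isLt; have := c.isLt
  apply Fin.ext
  split_ifs at hv <;> omega

end Aux

theorem sdim_strongProd_triangle_oddCycle (t : ℕ) (ht : 1 ≤ t) :
    sdim (strongProd (cycleGraph 3) (cycleGraph (2 * t + 1))) = 5 * t + 3 := by
  classical
  have hm : (3:ℕ) ≤ 2*t+1 := by omega
  have h2m : (2:ℕ) ≤ 2*t+1 := by omega
  have hconn : (PG (2*t+1)).Connected := PG_conn hm
  have hcardV : Fintype.card (Fin 3 × Fin (2*t+1)) = 6*t+3 := by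
    rw [Fintype.card_prod, Fintype.card_fin, Fintype.card_fin]
    ring
  set T : Finset (Fin 3 × Fin (2*t+1)) :=
    Finset.image (fun i : Fin t => ((0:Fin 3), (⟨i.val, by omega⟩ : Fin (2*t+1))))
      Finset.univ with hT
  have hmemT : ∀ x : Fin 3 × Fin (2*t+1), x ∈ T ↔ x.1 = 0 ∧ x.2.val < t := by
    intro x
    rw [hT, Finset.mem_image]
    constructor
    · rintro ⟨i, -, rfl⟩
      exact ⟨rfl, i.isLt⟩
    · rintro ⟨h1, h2⟩
      refine ⟨⟨x.2.val, h2⟩, Finset.mem_univ _, ?_⟩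
      exact Prod.ext h1.symm (Fin.ext rfl)
  have hinj : Function.Injective
      (fun i : Fin t => ((0:Fin 3), (⟨i.val, by omega⟩ : Fin (2*t+1)))) := by
    intro i j h
    apply Fin.ext
    have := congrArg (fun p : Fin 3 × Fin (2*t+1) => p.2.val) h
    simpa using this
  have hcardT : T.card = t := by
    rw [hT, Finset.card_image_of_injective _ hinj, Finset.card_univ, Fintype.card_fin]
  set S := (Finset.univ : Finset (Fin 3 × Fin (2*t+1))) \ T with hS
  have hcardS : S.card = 5*t+3 := by
    rw [hS, Finset.card_sdiff_of_subset (Finset.subset_univ T), Finset.card_univ, hcardV, hcardT]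
    omega
  have hgen : IsStrongMetricGenerator (PG (2*t+1)) S := by
    intro u v huv
    by_cases hu : u ∈ S
    · exact ⟨u, hu, Or.inr (by rw [SimpleGraph.dist_self]; omega)⟩
    by_cases hv : v ∈ S
    · exact ⟨v, hv, Or.inl (by rw [SimpleGraph.dist_self]; omega)⟩
    have hu' : u ∈ T := by
      rw [hS, Finset.mem_sdiff] at hu
      simpa using hu
    have hv' : v ∈ T := by
      rw [hS, Finset.mem_sdiff] at hv
      simpa using hv
    obtain ⟨hu1, hu2⟩ := (hmemT u).mp hu'
    obtain ⟨hv1, hv2⟩ := (hmemT v).mp hv'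
    have hne2 : u.2.val ≠ v.2.val := by
      intro h
      exact huv (Prod.ext (hu1.trans hv1.symm) (Fin.ext h))
    rcases Nat.lt_or_ge u.2.val v.2.val with hlt | hge
    · refine ⟨((0:Fin 3), (⟨u.2.val + t, by omega⟩ : Fin (2*t+1))), ?_,
        resolve_helper ht u v hu2 hv2 hlt⟩
      rw [hS, Finset.mem_sdiff]
      refine ⟨Finset.mem_univ _, fun hw => ?_⟩
      have h := ((hmemT _).mp hw).2
      simp only [Fin.val_mk] at h
      omega
    · have hlt : v.2.val < u.2.val := by omega
      refine ⟨((0:Fin 3), (⟨v.2.val + t, by omega⟩ : Fin (2*t+1))), ?_,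
        stronglyResolves_symm (resolve_helper ht v u hv2 hu2 hlt)⟩
      rw [hS, Finset.mem_sdiff]
      refine ⟨Finset.mem_univ _, fun hw => ?_⟩
      have h := ((hmemT _).mp hw).2
      simp only [Fin.val_mk] at h
      omega
  have hmem : (5*t+3) ∈ {n | ∃ s : Finset (Fin 3 × Fin (2 * t + 1)),
      IsStrongMetricGenerator (strongProd (cycleGraph 3) (cycleGraph (2 * t + 1))) s ∧
      s.card = n} := ⟨S, hgen, hcardS⟩
  unfold sdim
  apply le_antisymm
  · exact Nat.sInf_le hmem
  · apply le_csInf ⟨5*t+3, hmem⟩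
    rintro n ⟨s, hsgen, rfl⟩
    set T' := (Finset.univ : Finset (Fin 3 × Fin (2*t+1))) \ s with hT'
    have hkey : ∀ u ∈ T', ∀ v ∈ T', u ≠ v →
        ¬ MutuallyMaximallyDistant (PG (2*t+1)) u v := by
      intro u hu v hv huv hmmd
      obtain ⟨w, hws, hwr⟩ := hsgen u v huv
      rcases resolver_mem hconn hmmd huv hwr with rfl | rfl
      · exact (Finset.mem_sdiff.mp hu).2 hws
      · exact (Finset.mem_sdiff.mp hv).2 hws
    set C := T'.image Prod.snd with hC
    have hcardC : C.card = T'.card := by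
      rw [hC]
      apply Finset.card_image_of_injOn
      intro u hu v hv h
      by_contra hne
      exact hkey u hu v hv hne (mmd_col hm h hne)
    have hstep : ∀ b ∈ C, b + (⟨t, by omega⟩ : Fin (2*t+1)) ∉ C := by
      intro b hb hb'
      rw [hC, Finset.mem_image] at hb hb'
      obtain ⟨u, hu, hu2⟩ := hb
      obtain ⟨v, hv, hv2⟩ := hb'
      have hbv := b.isLt
      have hne : u ≠ v := by
        intro h
        rw [h, hv2] at hu2
        have hval : (b + (⟨t, by omega⟩ : Fin (2*t+1))).val = b.val := congrArg Fin.val hu2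
        rw [fin_add_val] at hval
        simp only [Fin.val_mk] at hval
        split_ifs at hval <;> omega
      apply hkey u hu v hv hne
      apply mmd_far ht
      rw [hu2, hv2, cd_mk]
      simp only [fin_add_val, Fin.val_mk]
      split_ifs <;> omega
    set C' := C.image (· + (⟨t, by omega⟩ : Fin (2*t+1))) with hC'
    have hdisj : Disjoint C C' := by
      rw [Finset.disjoint_right]
      intro x hx' hx
      rw [hC', Finset.mem_image] at hx'
      obtain ⟨b, hb, rfl⟩ := hx'
      exact hstep b hb hx
    have hcardC' : C'.card = C.card := by
      rw [hC']
      exact Finset.card_image_of_injective _ (fun a b h => fin_add_right_cancel h)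
    have hle : C.card + C'.card ≤ 2*t+1 := by
      rw [← Finset.card_union_of_disjoint hdisj]
      calc (C ∪ C').card ≤ (Finset.univ : Finset (Fin (2*t+1))).card :=
            Finset.card_le_card (Finset.subset_univ _)
        _ = 2*t+1 := by rw [Finset.card_univ, Fintype.card_fin]
    have hcardT' : T'.card = 6*t+3 - s.card := by
      rw [hT', Finset.card_sdiff_of_subset (Finset.subset_univ s), Finset.card_univ, hcardV]
    have hsle : s.card ≤ 6*t+3 := by
      calc s.card ≤ (Finset.univ : Finset (Fin 3 × Fin (2*t+1))).card :=
            Finset.card_le_card (Finset.subset_univ _)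
        _ = 6*t+3 := by rw [Finset.card_univ, hcardV]
    omega
end
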